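/- For any point M in the plane, the sides of its pedal triangle satisfy dist B₁ C₁ = (a · dist M A)/(2R), dist C₁ A₁ = (b · dist M B)/(2R), and dist A₁ B₁ = (c · dist M C)/(2R). -/

import Mathlib

open EuclideanGeometry
open scoped RealInnerProductSpace

noncomputable section

abbrev E2 := EuclideanSpace ℝ (Fin 2)

lemma proj_line (X Y M : E2) (h : Y - X ≠ 0) :
    (EuclideanGeometry.orthogonalProjection (affineSpan ℝ {X, Y}) M : E2) =
      (⟪Y - X, M - X⟫ / ‖Y - X‖ ^ 2) • (Y - X) + X := by
  haveI : Nonempty (affineSpan ℝ ({X, Y} : Set E2)) :=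
    ⟨⟨X, mem_affineSpan ℝ (by simp)⟩⟩
  have hdir : (affineSpan ℝ ({X, Y} : Set E2)).direction = ℝ ∙ (Y - X) := by
    rw [direction_affineSpan, vectorSpan_pair]
    have : (X -ᵥ Y : E2) = (-1 : ℝ) • (Y - X) := by
      simp [vsub_eq_sub]
    rw [this, Submodule.span_singleton_smul_eq (by norm_num : IsUnit (-1 : ℝ))]
  set s := (⟪Y - X, M - X⟫ / ‖Y - X‖ ^ 2)
  have hmem : (s • (Y - X) + X) ∈ affineSpan ℝ ({X, Y} : Set E2) := by
    have : (s • (Y - X) + X) = (s • (Y - X)) +ᵥ X := rfl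
    rw [this]
    refine AffineSubspace.vadd_mem_of_mem_direction ?_ (mem_affineSpan ℝ (by simp))
    rw [hdir]
    exact Submodule.smul_mem _ _ (Submodule.mem_span_singleton_self _)
  have hperp : (s • (Y - X) + X) ∈ AffineSubspace.mk' M
      (affineSpan ℝ ({X, Y} : Set E2)).directionᗮ := by
    rw [AffineSubspace.mem_mk', hdir,
      Submodule.mem_orthogonal_singleton_iff_inner_right]
    have : (s • (Y - X) + X -ᵥ M : E2) = s • (Y - X) - (M - X) := by
      simp [vsub_eq_sub]; abel
    rw [this, inner_sub_right, real_inner_smul_right, real_inner_self_eq_norm_sq,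
      div_mul_cancel₀ _ (pow_ne_zero 2 (norm_ne_zero_iff.2 h)), sub_self]
  have hint := EuclideanGeometry.inter_eq_singleton_orthogonalProjection
    (s := affineSpan ℝ ({X, Y} : Set E2)) M
  have : (s • (Y - X) + X) ∈ ({(EuclideanGeometry.orthogonalProjection
      (affineSpan ℝ ({X, Y} : Set E2)) M : E2)} : Set E2) := by
    rw [← hint]; exact ⟨hmem, hperp⟩
  exact (Set.mem_singleton_iff.mp this).symm

lemma ai_perm {P Q S : E2} (h : AffineIndependent ℝ ![P, Q, S]) (e : Equiv.Perm (Fin 3))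
    (h0 : ![P, Q, S] (e 0) = P') (h1 : ![P, Q, S] (e 1) = Q') (h2 : ![P, Q, S] (e 2) = S') :
    AffineIndependent ℝ ![P', Q', S'] := by
  have := (affineIndependent_equiv e).2 h
  convert this using 1
  funext i
  fin_cases i
  · simpa using h0.symm
  · simpa using h1.symm
  · simpa using h2.symm

lemma li_sub {P Q S : E2} (h : AffineIndependent ℝ ![P, Q, S]) :
    LinearIndependent ℝ ![Q - P, S - P] := by
  rw [LinearIndependent.pair_iff]
  intro s t hst
  have key := affineIndependent_iff.mp h Finset.univ ![-(s + t), s, t]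
    (by simp [Fin.sum_univ_three])
    (by
      simp only [Fin.sum_univ_three]
      show (-(s + t)) • P + s • Q + t • S = 0
      have : (-(s + t)) • P + s • Q + t • S = s • (Q - P) + t • (S - P) := by module
      rw [this, hst])
  exact ⟨by simpa using key 1 (Finset.mem_univ _), by simpa using key 2 (Finset.mem_univ _)⟩

set_option maxHeartbeats 1000000 in
lemma pedal (X Y Z O M : E2) (R : ℝ) (hR : 0 < R)
    (hli : LinearIndependent ℝ ![Y - X, Z - X])
    (hOX : dist O X = R) (hOY : dist O Y = R) (hOZ : dist O Z = R) :
    dist (EuclideanGeometry.orthogonalProjection (affineSpan ℝ {X, Y}) M : E2)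
      (EuclideanGeometry.orthogonalProjection (affineSpan ℝ {X, Z}) M : E2) =
      dist Y Z * dist M X / (2 * R) := by
  have hu : Y - X ≠ 0 := by have := hli.ne_zero 0; simpa using this
  have hv : Z - X ≠ 0 := by have := hli.ne_zero 1; simpa using this
  rw [proj_line X Y M hu, proj_line X Z M hv, dist_eq_norm,
    show ∀ x y : E2, (x + X) - (y + X) = x - y from fun x y => by abel,
    show dist Y Z = ‖(Y - X) - (Z - X)‖ from by rw [dist_eq_norm]; congr 1; abel,
    show dist M X = ‖M - X‖ from dist_eq_norm M X]
  set u := Y - X with hu_def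
  set v := Z - X with hv_def
  set m := M - X with hm_def
  have hR0 : R ≠ 0 := ne_of_gt hR
  have hp0 : ⟪u, u⟫ ≠ 0 := fun hc => hu (inner_self_eq_zero.mp hc)
  have hq0 : ⟪v, v⟫ ≠ 0 := fun hc => hv (inner_self_eq_zero.mp hc)
  -- span is everything
  have htop : Submodule.span ℝ ({u, v} : Set E2) = ⊤ := by
    have hcard : Fintype.card (Fin 2) = Module.finrank ℝ E2 := by
      simp [finrank_euclideanSpace_fin]
    have := hli.span_eq_top_of_card_eq_finrank hcard
    rwa [show Set.range ![u, v] = {u, v} by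
      ext x
      simp only [Matrix.range_cons, Matrix.range_empty, Set.mem_insert_iff,
        Set.union_empty, Set.union_singleton, Set.mem_singleton_iff]
      tauto] at this
  have hmem : ∀ x : E2, ∃ a b : ℝ, a • u + b • v = x := fun x =>
    Submodule.mem_span_pair.1 (htop ▸ Submodule.mem_top)
  obtain ⟨α, β, hm⟩ := hmem m
  obtain ⟨γ, δ, hw⟩ := hmem (O - X)
  -- inner products with m
  have him : ⟪u, m⟫ = α * ⟪u, u⟫ + β * ⟪u, v⟫ := by
    rw [← hm]
    simp only [inner_add_right, real_inner_smul_right]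
  have hjm : ⟪v, m⟫ = α * ⟪u, v⟫ + β * ⟪v, v⟫ := by
    rw [← hm]
    simp only [inner_add_right, real_inner_smul_right]
    rw [real_inner_comm v u]
  have hmm : ⟪m, m⟫ = α^2 * ⟪u, u⟫ + 2*α*β*⟪u, v⟫ + β^2 * ⟪v, v⟫ := by
    rw [← hm]
    simp only [inner_add_left, inner_add_right, real_inner_smul_left, real_inner_smul_right]
    rw [real_inner_comm v u]
    ring
  -- circumcircle facts
  have nw : ‖O - X‖ = R := by rw [← dist_eq_norm]; exact hOX
  have nwu : ‖(O - X) - u‖ = R := by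
    rw [hu_def, show (O - X) - (Y - X) = O - Y from by abel, ← dist_eq_norm]; exact hOY
  have nwv : ‖(O - X) - v‖ = R := by
    rw [hv_def, show (O - X) - (Z - X) = O - Z from by abel, ← dist_eq_norm]; exact hOZ
  have sq_w : ⟪O - X, O - X⟫ = R^2 := by rw [real_inner_self_eq_norm_sq, nw]
  have sq_wu : ⟪O - X, O - X⟫ - 2*⟪O - X, u⟫ + ⟪u, u⟫ = R^2 := by
    rw [← real_inner_sub_sub_self, real_inner_self_eq_norm_sq, nwu]
  have sq_wv : ⟪O - X, O - X⟫ - 2*⟪O - X, v⟫ + ⟪v, v⟫ = R^2 := by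
    rw [← real_inner_sub_sub_self, real_inner_self_eq_norm_sq, nwv]
  have hwu : ⟪O - X, u⟫ = γ * ⟪u, u⟫ + δ * ⟪u, v⟫ := by
    rw [← hw]
    simp only [inner_add_left, real_inner_smul_left]
    rw [real_inner_comm v u]
  have hwv : ⟪O - X, v⟫ = γ * ⟪u, v⟫ + δ * ⟪v, v⟫ := by
    rw [← hw]
    simp only [inner_add_left, real_inner_smul_left]
  have hww : ⟪O - X, O - X⟫ = γ^2 * ⟪u, u⟫ + 2*γ*δ*⟪u, v⟫ + δ^2 * ⟪v, v⟫ := by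
    rw [← hw]
    simp only [inner_add_left, inner_add_right, real_inner_smul_left, real_inner_smul_right]
    rw [real_inner_comm v u]
    ring
  have E1 : ⟪u, u⟫ = 2*(γ * ⟪u, u⟫ + δ * ⟪u, v⟫) := by
    linear_combination sq_wu - sq_w + 2*hwu
  have E2 : ⟪v, v⟫ = 2*(γ * ⟪u, v⟫ + δ * ⟪v, v⟫) := by
    linear_combination sq_wv - sq_w + 2*hwv
  have E3 : R^2 = γ^2 * ⟪u, u⟫ + 2*γ*δ*⟪u, v⟫ + δ^2 * ⟪v, v⟫ := by
    linear_combination hww - sq_w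
  have key : 4*R^2*(⟪u, u⟫*⟪v, v⟫ - ⟪u, v⟫^2) = (⟪u, u⟫ + ⟪v, v⟫ - 2*⟪u, v⟫)*(⟪u, u⟫*⟪v, v⟫) := by
    linear_combination (4*(⟪u, u⟫*⟪v, v⟫ - ⟪u, v⟫^2))*E3
      - (2*(⟪u, u⟫*⟪v, v⟫ - ⟪u, v⟫^2)*γ + ⟪u, u⟫*⟪v, v⟫ - ⟪v, v⟫*⟪u, v⟫)*E1
      - (2*(⟪u, u⟫*⟪v, v⟫ - ⟪u, v⟫^2)*δ + ⟪u, u⟫*⟪v, v⟫ - ⟪u, u⟫*⟪u, v⟫)*E2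
  -- final computation
  rw [← sq_eq_sq₀ (norm_nonneg _) (by positivity)]
  have L : ‖(⟪u, m⟫ / ‖u‖^2) • u - (⟪v, m⟫ / ‖v‖^2) • v‖^2
      = (⟪u, m⟫ / ⟪u, u⟫)^2 * ⟪u, u⟫
        - 2*((⟪u, m⟫ / ⟪u, u⟫) * (⟪v, m⟫ / ⟪v, v⟫) * ⟪u, v⟫)
        + (⟪v, m⟫ / ⟪v, v⟫)^2 * ⟪v, v⟫ := by
    rw [norm_sub_sq_real, norm_smul, norm_smul, real_inner_smul_left, real_inner_smul_right,
      ← real_inner_self_eq_norm_sq, ← real_inner_self_eq_norm_sq]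
    simp only [Real.norm_eq_abs, mul_pow, sq_abs]
    rw [← real_inner_self_eq_norm_sq, ← real_inner_self_eq_norm_sq]
    ring
  have Rhs : (‖u - v‖ * ‖m‖ / (2*R))^2
      = (⟪u, u⟫ - 2*⟪u, v⟫ + ⟪v, v⟫) * ⟪m, m⟫ / (2*R)^2 := by
    rw [div_pow, mul_pow,
      show ‖u - v‖^2 = ⟪u, u⟫ - 2*⟪u, v⟫ + ⟪v, v⟫ from by
        rw [← real_inner_self_eq_norm_sq, real_inner_sub_sub_self],
      show ‖m‖^2 = ⟪m, m⟫ from (real_inner_self_eq_norm_sq m).symm]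
  rw [L, Rhs, him, hjm, hmm]
  set P := ⟪u, u⟫ with hP_def
  set Q := ⟪v, v⟫ with hQ_def
  set rr := ⟪u, v⟫ with hrr_def
  field_simp
  linear_combination (α^2 * P + 2*α*β*rr + β^2 * Q) * key

lemma proj_pair_comm (X Y M : E2) :
    (EuclideanGeometry.orthogonalProjection (affineSpan ℝ {X, Y}) M : E2) =
      (EuclideanGeometry.orthogonalProjection (affineSpan ℝ {Y, X}) M : E2) :=
  EuclideanGeometry.eq_orthogonalProjection_of_eq_subspace (by rw [Set.pair_comm]) M

theorem stmt3 (A B C O M A₁ B₁ C₁ : EuclideanSpace ℝ (Fin 2)) (R a b c : ℝ)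
    (hABC : AffineIndependent ℝ ![A, B, C])
    (hR : 0 < R) (hOA : dist O A = R) (hOB : dist O B = R) (hOC : dist O C = R)
    (ha : a = dist B C) (hb : b = dist C A) (hc : c = dist A B)
    (hA₁ : A₁ = EuclideanGeometry.orthogonalProjection (affineSpan ℝ {B, C}) M)
    (hB₁ : B₁ = EuclideanGeometry.orthogonalProjection (affineSpan ℝ {C, A}) M)
    (hC₁ : C₁ = EuclideanGeometry.orthogonalProjection (affineSpan ℝ {A, B}) M) :
    dist B₁ C₁ = (a * dist M A) / (2 * R) ∧
    dist C₁ A₁ = (b * dist M B) / (2 * R) ∧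
    dist A₁ B₁ = (c * dist M C) / (2 * R) := by
  have hACB : AffineIndependent ℝ ![A, C, B] :=
    ai_perm hABC (Equiv.swap 1 2) (by simp [Equiv.swap_apply_def])
      (by simp [Equiv.swap_apply_def]) (by simp [Equiv.swap_apply_def])
  have hBAC : AffineIndependent ℝ ![B, A, C] :=
    ai_perm hABC (Equiv.swap 0 1) (by simp [Equiv.swap_apply_def])
      (by simp [Equiv.swap_apply_def]) (by simp [Equiv.swap_apply_def])
  have hCBA : AffineIndependent ℝ ![C, B, A] :=
    ai_perm hABC (Equiv.swap 0 2) (by simp [Equiv.swap_apply_def])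
      (by simp [Equiv.swap_apply_def]) (by simp [Equiv.swap_apply_def])
  refine ⟨?_, ?_, ?_⟩
  · rw [hB₁, hC₁, proj_pair_comm C A M, ha, dist_comm B C]
    exact pedal A C B O M R hR (li_sub hACB) hOA hOC hOB
  · rw [hC₁, hA₁, proj_pair_comm A B M, hb, dist_comm C A]
    exact pedal B A C O M R hR (li_sub hBAC) hOB hOA hOC
  · rw [hA₁, hB₁, proj_pair_comm B C M, hc, dist_comm A B]
    exact pedal C B A O M R hR (li_sub hCBA) hOC hOB hOA
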